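/- Let σ > 0, 0 < ρ < 1, m > 0, K > 0, and γ ≥ 0. Then the family of terms (k,i,n,j) ↦ α(k,i,n)·G(j,n,i−n,γ), indexed over quadruples of naturals with 0 ≤ n ≤ i ≤ k and j ∈ ℕ, is absolutely summable; i.e., ∑_{k=0}^∞ ∑_{i=0}^{k} ∑_{n=0}^{i} ∑_{j=0}^∞ |α(k,i,n) G(j,n,i−n,γ)| < ∞, so the quadruple-series expression for the marginal CDF F_{R₁}(γ) is well defined. -/

import Mathlib

open MeasureTheory

/-- Pochhammer symbol (ascending factorial) `(m)_k = m (m+1) ⋯ (m+k-1)`. -/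
noncomputable def poch (m : ℝ) (k : ℕ) : ℝ := ∏ j ∈ Finset.range k, (m + j)

/-- Modified Bessel function of the first kind of order zero,
`I₀(y) = ∑ (y/2)^{2n} / (n!)²`. -/
noncomputable def I0 (y : ℝ) : ℝ := ∑' n : ℕ, (y / 2) ^ (2 * n) / (Nat.factorial n : ℝ) ^ 2

/-- Confluent hypergeometric function `₁F₁(m, 1; z) = ∑ (m)_n zⁿ / (n!)²`. -/
noncomputable def F11 (m z : ℝ) : ℝ := ∑' n : ℕ, poch m n * z ^ n / (Nat.factorial n : ℝ) ^ 2

/-- Series coefficient `α(k,i,n)` of the bivariate Rician shadowed joint PDF. -/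
noncomputable def alpha (σ ρ m K : ℝ) (k i n : ℕ) : ℝ :=
  (8 * Real.rpow (m * ρ / (m * ρ + K)) m / (σ ^ 6 * ρ * (1 - ρ) ^ 2)) *
  (poch m (k - i) * (K / (σ ^ 2 * ρ * (ρ * m + K))) ^ (k - i) /
    (Nat.factorial (k - i) : ℝ) ^ 2) *
  (1 / ((Nat.factorial n : ℝ) ^ 2 * (Nat.factorial (i - n) : ℝ) ^ 2 *
    (σ ^ 2 * (1 - ρ)) ^ (2 * i))) *
  ((Nat.factorial k : ℝ) / (2 * ((1 + ρ) / (σ ^ 2 * ρ * (1 - ρ))) ^ (k + 1)))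

/-- Closed-form power series of the bivariate Rician shadowed joint PDF. -/
noncomputable def fpdf (σ ρ m K r₁ r₂ : ℝ) : ℝ :=
  ∑' k : ℕ, ∑ i ∈ Finset.range (k + 1), ∑ n ∈ Finset.range (i + 1),
    alpha σ ρ m K k i n * r₁ ^ (2 * n + 1) * r₂ ^ (2 * (i - n) + 1) *
      Real.exp (-(r₁ ^ 2 + r₂ ^ 2) / (σ ^ 2 * (1 - ρ)))

/-- `G(j,l,q,γ) = (−1)^j γ^{2(l+j+1)} q! (σ²(1−ρ))^{q+1−j} / (j!·4(l+j+1))`. -/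
noncomputable def Gfun (σ ρ : ℝ) (j l q : ℕ) (γ : ℝ) : ℝ :=
  (-1 : ℝ) ^ j * γ ^ (2 * (l + j + 1)) * (Nat.factorial q : ℝ) *
    (σ ^ 2 * (1 - ρ)) ^ ((q : ℤ) + 1 - (j : ℤ)) /
    ((Nat.factorial j : ℝ) * (4 * (l + j + 1)))

/-- `Ḡ(λ,k)`, the `(2(k+1))`-th moment of the BPP distance distribution. -/
noncomputable def Gbar (Dalt ra lam : ℝ) (k : ℕ) : ℝ :=
  ((Dalt ^ 2 + lam ^ 2 + ra ^ 2) ^ (k + 2) - (Dalt ^ 2 + lam ^ 2) ^ (k + 2)) /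
    (ra ^ 2 * (k + 2))

lemma poch_pos {m : ℝ} (hm : 0 < m) (d : ℕ) : 0 < poch m d :=
  Finset.prod_pos (fun j _ => by positivity)

lemma poch_succ (m : ℝ) (d : ℕ) : poch m (d + 1) = poch m d * (m + d) :=
  Finset.prod_range_succ _ _

lemma choose_mul_pow_le {x : ℝ} (hx : 0 ≤ x) {n k : ℕ} (h : n ≤ k) :
    (k.choose n : ℝ) * x ^ n ≤ (1 + x) ^ k := by
  have hexp : (x + 1) ^ k =
      ∑ i ∈ Finset.range (k + 1), x ^ i * 1 ^ (k - i) * (k.choose i : ℝ) := add_pow x 1 k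
  have hmem : n ∈ Finset.range (k + 1) := Finset.mem_range.mpr (by omega)
  have hle := Finset.single_le_sum
      (f := fun i => x ^ i * 1 ^ (k - i) * (k.choose i : ℝ)) (fun i _ => by positivity) hmem
  calc (k.choose n : ℝ) * x ^ n = x ^ n * 1 ^ (k - n) * (k.choose n : ℝ) := by ring
    _ ≤ (x + 1) ^ k := by rw [hexp]; exact hle
    _ = (1 + x) ^ k := by ring

lemma summable_poch_geom {m w : ℝ} (hm : 0 < m) (hw0 : 0 ≤ w) (hw1 : w < 1) :
    Summable (fun d : ℕ => poch m d * w ^ d / (Nat.factorial d : ℝ)) := by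
  obtain ⟨N, hN⟩ := exists_nat_gt (2 * w * m / (1 - w))
  apply summable_of_ratio_norm_eventually_le (r := (1 + w) / 2) (by linarith)
  rw [Filter.eventually_atTop]
  refine ⟨N, fun d hd => ?_⟩
  have hpd : 0 < poch m d := poch_pos hm d
  have hd' : 2 * w * m / (1 - w) < (d : ℝ) :=
    lt_of_lt_of_le hN (by exact_mod_cast Nat.cast_le.mpr hd)
  have h2 : 2 * w * m < (d : ℝ) * (1 - w) := by
    rw [div_lt_iff₀ (by linarith)] at hd'; linarith
  have hfac : (0:ℝ) < (Nat.factorial d : ℝ) := by exact_mod_cast d.factorial_pos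
  have hkey : (m + d) * w / ((d : ℝ) + 1) ≤ (1 + w) / 2 := by
    rw [div_le_div_iff₀ (by positivity) (by norm_num)]
    nlinarith [h2, hw0]
  have hpd1 : 0 < poch m (d + 1) := poch_pos hm _
  rw [Real.norm_eq_abs, Real.norm_eq_abs, abs_of_nonneg (by positivity),
    abs_of_nonneg (by positivity)]
  have heq : poch m (d + 1) * w ^ (d + 1) / (Nat.factorial (d + 1) : ℝ) =
      (poch m d * w ^ d / (Nat.factorial d : ℝ)) * ((m + d) * w / ((d : ℝ) + 1)) := by
    rw [poch_succ, Nat.factorial_succ]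
    push_cast
    field_simp
    ring
  rw [heq]
  calc (poch m d * w ^ d / (Nat.factorial d : ℝ)) * ((m + d) * w / ((d : ℝ) + 1))
      ≤ (poch m d * w ^ d / (Nat.factorial d : ℝ)) * ((1 + w) / 2) :=
        mul_le_mul_of_nonneg_left hkey (by positivity)
    _ = (1 + w) / 2 * (poch m d * w ^ d / (Nat.factorial d : ℝ)) := mul_comm _ _

def quadEquiv : (ℕ × ℕ × ℕ) × ℕ ≃ {p : (ℕ × ℕ × ℕ) × ℕ // p.1.2.2 ≤ p.1.2.1 ∧ p.1.2.1 ≤ p.1.1} where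
  toFun t := ⟨((t.1.1 + t.1.2.1 + t.1.2.2, t.1.1 + t.1.2.1, t.1.1), t.2),
    ⟨Nat.le_add_right _ _, Nat.le_add_right _ _⟩⟩
  invFun p := ((p.1.1.2.2, p.1.1.2.1 - p.1.1.2.2, p.1.1.1 - p.1.1.2.1), p.1.2)
  left_inv t := by
    obtain ⟨⟨n, q, d⟩, j⟩ := t
    simp only [Prod.mk.injEq]
    refine ⟨⟨?_, ?_, ?_⟩, ?_⟩ <;> first | trivial | omega
  right_inv p := by
    obtain ⟨⟨⟨k, i, n⟩, j⟩, h1, h2⟩ := p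
    have h1' : n ≤ i := h1
    have h2' : i ≤ k := h2
    apply Subtype.ext
    simp only [Prod.mk.injEq]
    refine ⟨⟨?_, ?_, ?_⟩, ?_⟩ <;> first | trivial | omega

set_option maxHeartbeats 1000000 in
lemma abstract_eq (C0 A S B X Z γ m : ℝ) (n q d j : ℕ)
    (hS : S ≠ 0) (hB : B ≠ 0) (hX : X ≠ 0) (hZ : Z ≠ 0) (h1X : 1 + X ≠ 0) (h1Z : 1 + Z ≠ 0)
    (hnj : (n:ℝ) + (j:ℝ) + 1 ≠ 0) :
    (C0 * (poch m d * A ^ d / (Nat.factorial d : ℝ) ^ 2) *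
      (1 / ((Nat.factorial n : ℝ) ^ 2 * (Nat.factorial q : ℝ) ^ 2 * S ^ (2 * (n + q)))) *
      ((Nat.factorial (n + q + d) : ℝ) / (2 * B ^ (n + q + d + 1)))) *
      (γ ^ (2 * (n + j + 1)) * (Nat.factorial q : ℝ) * (S ^ (q + 1) / S ^ j) /
        ((Nat.factorial j : ℝ) * (4 * ((n:ℝ) + (j:ℝ) + 1)))) =
    (C0 * γ ^ 2 * S / (8 * B)) *
      ((Nat.factorial (n + q + d) : ℝ) * X ^ n * Z ^ d /
        ((1 + X) ^ (n + q) * (1 + Z) ^ (n + q + d) *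
          ((Nat.factorial n : ℝ) * (Nat.factorial q : ℝ) * (Nat.factorial d : ℝ)) *
          ((n:ℝ) + (j:ℝ) + 1))) *
      ((γ ^ 2 * (1 + X) * (1 + Z) / (B * S ^ 2 * X)) ^ n / (Nat.factorial n : ℝ) *
        (((1 + X) * (1 + Z) / (B * S)) ^ q *
          (poch m d * (A * (1 + Z) / (B * Z)) ^ d / (Nat.factorial d : ℝ))) *
        ((γ ^ 2 / S) ^ j / (Nat.factorial j : ℝ))) := by
  have hnf : (Nat.factorial n : ℝ) ≠ 0 := by positivity
  have hqf : (Nat.factorial q : ℝ) ≠ 0 := by positivity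
  have hdf : (Nat.factorial d : ℝ) ≠ 0 := by positivity
  have hjf : (Nat.factorial j : ℝ) ≠ 0 := by positivity
  have hkf : (Nat.factorial (n + q + d) : ℝ) ≠ 0 := by positivity
  simp only [mul_pow, div_pow, pow_add, pow_mul, pow_one]
  field_simp
  ring
noncomputable def Cc (σ ρ m K γ : ℝ) : ℝ :=
  8 * Real.rpow (m * ρ / (m * ρ + K)) m / (σ ^ 6 * ρ * (1 - ρ) ^ 2) * γ ^ 2 * (σ ^ 2 * (1 - ρ)) /
    (8 * ((1 + ρ) / (σ ^ 2 * ρ * (1 - ρ))))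

noncomputable def uu (σ ρ γ X Z : ℝ) : ℝ :=
  γ ^ 2 * (1 + X) * (1 + Z) / ((1 + ρ) / (σ ^ 2 * ρ * (1 - ρ)) * (σ ^ 2 * (1 - ρ)) ^ 2 * X)

noncomputable def vv (σ ρ X Z : ℝ) : ℝ :=
  (1 + X) * (1 + Z) / ((1 + ρ) / (σ ^ 2 * ρ * (1 - ρ)) * (σ ^ 2 * (1 - ρ)))

noncomputable def ww (σ ρ m K Z : ℝ) : ℝ :=
  K / (σ ^ 2 * ρ * (ρ * m + K)) * (1 + Z) / ((1 + ρ) / (σ ^ 2 * ρ * (1 - ρ)) * Z)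

lemma pointwise_bound (σ ρ m K γ X Z : ℝ) (hσ : 0 < σ) (hρ0 : 0 < ρ) (hρ1 : ρ < 1)
    (hm : 0 < m) (hK : 0 < K) (hγ : 0 ≤ γ) (hX : 0 < X) (hZ : 0 < Z) (n q d j : ℕ) :
    |alpha σ ρ m K (n + q + d) (n + q) n * Gfun σ ρ j n q γ| ≤
      (Cc σ ρ m K γ * (uu σ ρ γ X Z) ^ n / (Nat.factorial n : ℝ)) *
        ((vv σ ρ X Z) ^ q * (poch m d * (ww σ ρ m K Z) ^ d / (Nat.factorial d : ℝ))) *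
        ((γ ^ 2 / (σ ^ 2 * (1 - ρ))) ^ j / (Nat.factorial j : ℝ)) := by
  have h1m : 0 < 1 - ρ := by linarith
  have h1p : 0 < 1 + ρ := by linarith
  have hs : (0:ℝ) < σ ^ 2 * (1 - ρ) := by positivity
  have hpoch : 0 < poch m d := poch_pos hm d
  have hrpow : 0 < Real.rpow (m * ρ / (m * ρ + K)) m :=
    Real.rpow_pos_of_pos (by positivity) m
  have hki : n + q + d - (n + q) = d := by omega
  have hin : n + q - n = q := by omega
  have hα : 0 ≤ alpha σ ρ m K (n + q + d) (n + q) n := by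
    rw [alpha, hki, hin]; positivity
  have hzp : (σ ^ 2 * (1 - ρ)) ^ ((q : ℤ) + 1 - (j : ℤ)) =
      (σ ^ 2 * (1 - ρ)) ^ (q + 1) / (σ ^ 2 * (1 - ρ)) ^ j := by
    rw [zpow_sub₀ (ne_of_gt hs), show ((q:ℤ) + 1) = ((q + 1 : ℕ) : ℤ) from by push_cast; ring,
      zpow_natCast, zpow_natCast]
  have hGabs : |Gfun σ ρ j n q γ| = γ ^ (2 * (n + j + 1)) * (Nat.factorial q : ℝ) *
      ((σ ^ 2 * (1 - ρ)) ^ (q + 1) / (σ ^ 2 * (1 - ρ)) ^ j) /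
      ((Nat.factorial j : ℝ) * (4 * ((n:ℝ) + (j:ℝ) + 1))) := by
    rw [Gfun, hzp, abs_div, abs_mul, abs_mul, abs_mul, abs_pow, abs_neg, abs_one, one_pow,
      one_mul, abs_of_nonneg (pow_nonneg hγ _),
      abs_of_nonneg (by positivity : (0:ℝ) ≤ (Nat.factorial q : ℝ)),
      abs_of_nonneg (by positivity : (0:ℝ) ≤ (σ ^ 2 * (1 - ρ)) ^ (q + 1) / (σ ^ 2 * (1 - ρ)) ^ j),
      abs_of_nonneg (by positivity : (0:ℝ) ≤ (Nat.factorial j : ℝ) * (4 * ((n:ℝ) + (j:ℝ) + 1)))]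
  have hNfac : ((n + q + d).factorial : ℝ) =
      ((n + q + d).choose d : ℝ) * ((n + q).choose n : ℝ) *
        ((n.factorial : ℝ) * (q.factorial : ℝ) * (d.factorial : ℝ)) := by
    have h1 : (n + q + d).choose d * d.factorial * (n + q).factorial = (n + q + d).factorial := by
      have h := Nat.choose_mul_factorial_mul_factorial (show d ≤ n + q + d by omega)
      rwa [show n + q + d - d = n + q from by omega] at h
    have h2 : (n + q).choose n * n.factorial * q.factorial = (n + q).factorial := by
      have h := Nat.choose_mul_factorial_mul_factorial (show n ≤ n + q by omega)
      rwa [show n + q - n = q from by omega] at h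
    rw [← h1, ← h2]; push_cast; ring
  have hfact : ((n + q + d).factorial : ℝ) * X ^ n * Z ^ d ≤
      (1 + X) ^ (n + q) * (1 + Z) ^ (n + q + d) *
        ((n.factorial : ℝ) * (q.factorial : ℝ) * (d.factorial : ℝ)) := by
    have b1 := choose_mul_pow_le hZ.le (show d ≤ n + q + d by omega)
    have b2 := choose_mul_pow_le hX.le (show n ≤ n + q by omega)
    calc ((n + q + d).factorial : ℝ) * X ^ n * Z ^ d
        = (((n + q).choose n : ℝ) * X ^ n) * (((n + q + d).choose d : ℝ) * Z ^ d) *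
          ((n.factorial : ℝ) * (q.factorial : ℝ) * (d.factorial : ℝ)) := by rw [hNfac]; ring
      _ ≤ ((1 + X) ^ (n + q)) * ((1 + Z) ^ (n + q + d)) *
          ((n.factorial : ℝ) * (q.factorial : ℝ) * (d.factorial : ℝ)) :=
          mul_le_mul_of_nonneg_right
            (mul_le_mul b2 b1 (by positivity) (by positivity)) (by positivity)
  have h1le : (1:ℝ) ≤ (n:ℝ) + (j:ℝ) + 1 := by
    have hn0 : (0:ℝ) ≤ (n:ℝ) := Nat.cast_nonneg n
    have hj0 : (0:ℝ) ≤ (j:ℝ) := Nat.cast_nonneg j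
    linarith
  have hK1 : ((n + q + d).factorial : ℝ) * X ^ n * Z ^ d /
      ((1 + X) ^ (n + q) * (1 + Z) ^ (n + q + d) *
        ((n.factorial : ℝ) * (q.factorial : ℝ) * (d.factorial : ℝ)) * ((n:ℝ) + (j:ℝ) + 1)) ≤ 1 := by
    have hnf : (0:ℝ) < (n.factorial : ℝ) := by exact_mod_cast n.factorial_pos
    have hqf : (0:ℝ) < (q.factorial : ℝ) := by exact_mod_cast q.factorial_pos
    have hdf : (0:ℝ) < (d.factorial : ℝ) := by exact_mod_cast d.factorial_pos
    rw [div_le_one (by positivity)]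
    exact hfact.trans (le_mul_of_one_le_right (by positivity) h1le)
  have hCc : 0 ≤ Cc σ ρ m K γ := by rw [Cc]; positivity
  have huu : 0 ≤ uu σ ρ γ X Z := by rw [uu]; positivity
  have hvv : 0 ≤ vv σ ρ X Z := by rw [vv]; positivity
  have hww : 0 ≤ ww σ ρ m K Z := by rw [ww]; positivity
  have hR : 0 ≤ (uu σ ρ γ X Z) ^ n / (Nat.factorial n : ℝ) *
      ((vv σ ρ X Z) ^ q * (poch m d * (ww σ ρ m K Z) ^ d / (Nat.factorial d : ℝ))) *
      ((γ ^ 2 / (σ ^ 2 * (1 - ρ))) ^ j / (Nat.factorial j : ℝ)) := by positivity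
  calc |alpha σ ρ m K (n + q + d) (n + q) n * Gfun σ ρ j n q γ|
      = alpha σ ρ m K (n + q + d) (n + q) n * |Gfun σ ρ j n q γ| := by
        rw [abs_mul, abs_of_nonneg hα]
    _ = Cc σ ρ m K γ *
        (((n + q + d).factorial : ℝ) * X ^ n * Z ^ d /
          ((1 + X) ^ (n + q) * (1 + Z) ^ (n + q + d) *
            ((n.factorial : ℝ) * (q.factorial : ℝ) * (d.factorial : ℝ)) *
            ((n:ℝ) + (j:ℝ) + 1))) *
        ((uu σ ρ γ X Z) ^ n / (Nat.factorial n : ℝ) *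
          ((vv σ ρ X Z) ^ q * (poch m d * (ww σ ρ m K Z) ^ d / (Nat.factorial d : ℝ))) *
          ((γ ^ 2 / (σ ^ 2 * (1 - ρ))) ^ j / (Nat.factorial j : ℝ))) := by
        rw [hGabs, alpha, hki, hin]
        rw [abstract_eq (8 * Real.rpow (m * ρ / (m * ρ + K)) m / (σ ^ 6 * ρ * (1 - ρ) ^ 2))
          (K / (σ ^ 2 * ρ * (ρ * m + K))) (σ ^ 2 * (1 - ρ)) ((1 + ρ) / (σ ^ 2 * ρ * (1 - ρ)))
          X Z γ m n q d j (by positivity) (by positivity) (ne_of_gt hX) (ne_of_gt hZ)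
          (by positivity) (by positivity) (by positivity)]
        rw [Cc, uu, vv, ww]
    _ ≤ Cc σ ρ m K γ * 1 *
        ((uu σ ρ γ X Z) ^ n / (Nat.factorial n : ℝ) *
          ((vv σ ρ X Z) ^ q * (poch m d * (ww σ ρ m K Z) ^ d / (Nat.factorial d : ℝ))) *
          ((γ ^ 2 / (σ ^ 2 * (1 - ρ))) ^ j / (Nat.factorial j : ℝ))) :=
        mul_le_mul_of_nonneg_right (mul_le_mul_of_nonneg_left hK1 hCc) hR
    _ = (Cc σ ρ m K γ * (uu σ ρ γ X Z) ^ n / (Nat.factorial n : ℝ)) *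
        ((vv σ ρ X Z) ^ q * (poch m d * (ww σ ρ m K Z) ^ d / (Nat.factorial d : ℝ))) *
        ((γ ^ 2 / (σ ^ 2 * (1 - ρ))) ^ j / (Nat.factorial j : ℝ)) := by ring

set_option maxHeartbeats 1000000 in
theorem cdf_series_abs_summable (σ ρ m K γ : ℝ)
    (hσ : 0 < σ) (hρ0 : 0 < ρ) (hρ1 : ρ < 1) (hm : 0 < m) (hK : 0 < K) (hγ : 0 ≤ γ) :
    Summable (fun p : {p : (ℕ × ℕ × ℕ) × ℕ // p.1.2.2 ≤ p.1.2.1 ∧ p.1.2.1 ≤ p.1.1} =>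
      |alpha σ ρ m K p.val.1.1 p.val.1.2.1 p.val.1.2.2 *
        Gfun σ ρ p.val.2 p.val.1.2.2 (p.val.1.2.1 - p.val.1.2.2) γ|) := by
  have h1m : 0 < 1 - ρ := by linarith
  have h1p : 0 < 1 + ρ := by linarith
  obtain ⟨Z, hZdef⟩ : ∃ z : ℝ, z = (K * (1 - ρ) / (ρ * (m * (1 + ρ) + 2 * K)) + 1 / ρ) / 2 :=
    ⟨_, rfl⟩
  have hM : 0 < m * (1 + ρ) + 2 * K := by positivity
  have hZ : 0 < Z := by rw [hZdef]; positivity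
  have hq1 : K * (1 - ρ) < m * (1 + ρ) + 2 * K := by nlinarith
  have hρZ : ρ * Z < 1 := by
    have e : ρ * Z = (K * (1 - ρ) / (m * (1 + ρ) + 2 * K) + 1) / 2 := by
      rw [hZdef]; field_simp
    have h2 : K * (1 - ρ) / (m * (1 + ρ) + 2 * K) < 1 := (div_lt_one hM).2 hq1
    rw [e]; linarith
  have hZρ : ρ * (1 + Z) < 1 + ρ := by nlinarith
  have hZlb : K * (1 - ρ) < ρ * (m * (1 + ρ) + 2 * K) * Z := by
    have e : ρ * (m * (1 + ρ) + 2 * K) * Z =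
        (K * (1 - ρ) + (m * (1 + ρ) + 2 * K)) / 2 := by
      rw [hZdef]; field_simp
    rw [e]; linarith
  obtain ⟨X, hXdef⟩ : ∃ x : ℝ, x = ((1 + ρ) / (ρ * (1 + Z)) - 1) / 2 := ⟨_, rfl⟩
  have hX : 0 < X := by
    have h3 : 1 < (1 + ρ) / (ρ * (1 + Z)) := (one_lt_div (by positivity)).2 hZρ
    rw [hXdef]; linarith
  have heX : ρ * (1 + X) * (1 + Z) = (ρ * (1 + Z) + (1 + ρ)) / 2 := by
    rw [hXdef]; field_simp; ring
  have hXZ : ρ * (1 + X) * (1 + Z) < 1 + ρ := by rw [heX]; linarith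
  -- summability facts
  have hCc : 0 ≤ Cc σ ρ m K γ := by
    have hrpow : 0 < Real.rpow (m * ρ / (m * ρ + K)) m :=
      Real.rpow_pos_of_pos (by positivity) m
    rw [Cc]; positivity
  have huu : 0 ≤ uu σ ρ γ X Z := by rw [uu]; positivity
  have hvv0 : 0 ≤ vv σ ρ X Z := by rw [vv]; positivity
  have hww0 : 0 ≤ ww σ ρ m K Z := by rw [ww]; positivity
  have hvv1 : vv σ ρ X Z < 1 := by
    rw [vv, div_lt_one (by positivity)]
    have e : (1 + ρ) / (σ ^ 2 * ρ * (1 - ρ)) * (σ ^ 2 * (1 - ρ)) = (1 + ρ) / ρ := by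
      field_simp
    rw [e, lt_div_iff₀ hρ0]
    nlinarith [hXZ]
  have hww1 : ww σ ρ m K Z < 1 := by
    rw [ww, div_lt_one (by positivity)]
    have hσ2 : (0:ℝ) < σ ^ 2 * ρ := by positivity
    have hcore : K * (1 + Z) * (1 - ρ) < (1 + ρ) * Z * (ρ * m + K) := by nlinarith [hZlb]
    rw [div_mul_eq_mul_div, div_mul_eq_mul_div,
      div_lt_div_iff₀ (by positivity) (by positivity)]
    calc K * (1 + Z) * (σ ^ 2 * ρ * (1 - ρ)) = σ ^ 2 * ρ * (K * (1 + Z) * (1 - ρ)) := by ring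
      _ < σ ^ 2 * ρ * ((1 + ρ) * Z * (ρ * m + K)) := by
          exact mul_lt_mul_of_pos_left hcore hσ2
      _ = (1 + ρ) * Z * (σ ^ 2 * ρ * (ρ * m + K)) := by ring
  have S1 : Summable (fun n : ℕ => Cc σ ρ m K γ * (uu σ ρ γ X Z) ^ n / (Nat.factorial n : ℝ)) :=
    ((Real.summable_pow_div_factorial (uu σ ρ γ X Z)).mul_left (Cc σ ρ m K γ)).congr
      (fun n => by rw [mul_div_assoc])
  have S2 : Summable (fun q : ℕ => (vv σ ρ X Z) ^ q) := summable_geometric_of_lt_one hvv0 hvv1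
  have S3 : Summable (fun d : ℕ => poch m d * (ww σ ρ m K Z) ^ d / (Nat.factorial d : ℝ)) :=
    summable_poch_geom hm hww0 hww1
  have S4 : Summable (fun j : ℕ => (γ ^ 2 / (σ ^ 2 * (1 - ρ))) ^ j / (Nat.factorial j : ℝ)) :=
    Real.summable_pow_div_factorial _
  have hpt1 : ∀ n : ℕ, 0 ≤ Cc σ ρ m K γ * (uu σ ρ γ X Z) ^ n / (Nat.factorial n : ℝ) :=
    fun n => by positivity
  have hpt3 : ∀ d : ℕ, 0 ≤ poch m d * (ww σ ρ m K Z) ^ d / (Nat.factorial d : ℝ) :=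
    fun d => div_nonneg (mul_nonneg (poch_pos hm d).le (pow_nonneg hww0 d)) (Nat.cast_nonneg _)
  have S23 : Summable (fun t : ℕ × ℕ =>
      (vv σ ρ X Z) ^ t.1 * (poch m t.2 * (ww σ ρ m K Z) ^ t.2 / (Nat.factorial t.2 : ℝ))) :=
    S2.mul_of_nonneg S3 (fun q => pow_nonneg hvv0 q) hpt3
  have S123 : Summable (fun t : ℕ × ℕ × ℕ =>
      (Cc σ ρ m K γ * (uu σ ρ γ X Z) ^ t.1 / (Nat.factorial t.1 : ℝ)) *
        ((vv σ ρ X Z) ^ t.2.1 *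
          (poch m t.2.2 * (ww σ ρ m K Z) ^ t.2.2 / (Nat.factorial t.2.2 : ℝ)))) :=
    S1.mul_of_nonneg S23 hpt1
      (fun t => mul_nonneg (pow_nonneg hvv0 _) (hpt3 _))
  have Sfull : Summable (fun p : (ℕ × ℕ × ℕ) × ℕ =>
      (Cc σ ρ m K γ * (uu σ ρ γ X Z) ^ p.1.1 / (Nat.factorial p.1.1 : ℝ)) *
        ((vv σ ρ X Z) ^ p.1.2.1 *
          (poch m p.1.2.2 * (ww σ ρ m K Z) ^ p.1.2.2 / (Nat.factorial p.1.2.2 : ℝ))) *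
        ((γ ^ 2 / (σ ^ 2 * (1 - ρ))) ^ p.2 / (Nat.factorial p.2 : ℝ))) :=
    S123.mul_of_nonneg S4
      (fun t => mul_nonneg (hpt1 _) (mul_nonneg (pow_nonneg hvv0 _) (hpt3 _)))
      (fun j => by positivity)
  refine (Equiv.summable_iff quadEquiv).mp ?_
  refine Summable.of_nonneg_of_le (fun p => abs_nonneg _) (fun p => ?_) Sfull
  obtain ⟨⟨n, q, d⟩, j⟩ := p
  show |alpha σ ρ m K (n + q + d) (n + q) n * Gfun σ ρ j n (n + q - n) γ| ≤ _
  rw [show n + q - n = q from by omega]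
  exact pointwise_bound σ ρ m K γ X Z hσ hρ0 hρ1 hm hK hγ hX hZ n q d j
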